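/- Let R be a finite commutative local ring with maximal ideal M, and let 0 ≤ m ≤ n. The number of m×n matrices over R of McCoy rank m equals |R|^{m(m-1)/2} · ∏_{i=0}^{m-1} (|R|^{n-i} − |M|^{n-i}). -/

import Mathlib

open Matrix

/-- The ideal generated by all `k × k` minors of a matrix. -/
def minorsIdeal {R : Type*} [CommRing R] {m n : ℕ}
    (A : Matrix (Fin m) (Fin n) R) (k : ℕ) : Ideal R :=
  Ideal.span {d | ∃ (r : Fin k → Fin m) (c : Fin k → Fin n), d = (A.submatrix r c).det}

/-- The McCoy rank of a matrix. -/
noncomputable def mccoyRank {R : Type*} [CommRing R] {m n : ℕ}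
    (A : Matrix (Fin m) (Fin n) R) : ℕ :=
  sSup {k | (minorsIdeal A k).annihilator = ⊥}

section Aux

open IsLocalRing

variable {R : Type*} [CommRing R] [IsLocalRing R]

lemma aux_annihilator_eq_bot_iff [Fintype R] (I : Ideal R) :
    I.annihilator = ⊥ ↔ I = ⊤ := by
  classical
  constructor
  · intro h
    by_contra hI
    have hle : I ≤ maximalIdeal R := le_maximalIdeal hI
    have : IsArtinianRing R := isArtinian_of_finite
    obtain ⟨k, hk⟩ := IsArtinianRing.isNilpotent_jacobson_bot (R := R)
    rw [jacobson_eq_maximalIdeal ⊥ bot_ne_top] at hk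
    have hex : ∃ k, maximalIdeal R ^ k = ⊥ := ⟨k, by simpa using hk⟩
    have hk₀pos : Nat.find hex ≠ 0 := by
      intro h0
      have h1 := Nat.find_spec hex
      rw [h0, pow_zero, Ideal.one_eq_top] at h1
      exact one_ne_zero ((Submodule.mem_bot R).mp (h1 ▸ Submodule.mem_top (x := (1 : R))))
    obtain ⟨j, hj⟩ := Nat.exists_eq_succ_of_ne_zero hk₀pos
    rw [Nat.succ_eq_add_one] at hj
    have hne : maximalIdeal R ^ j ≠ ⊥ := Nat.find_min hex (by omega)
    obtain ⟨x, hxmem, hx0⟩ := (Submodule.ne_bot_iff _).mp hne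
    apply hx0
    have hxann : x ∈ I.annihilator := Submodule.mem_annihilator.mpr fun y hy => by
      have hxy : x * y ∈ maximalIdeal R ^ j * maximalIdeal R :=
        Ideal.mul_mem_mul hxmem (hle hy)
      rw [← pow_succ, ← hj, Nat.find_spec hex] at hxy
      simpa using hxy
    rw [h] at hxann
    simpa using hxann
  · rintro rfl
    rw [eq_bot_iff]
    intro x hx
    have := Submodule.mem_annihilator.mp hx 1 Submodule.mem_top
    simpa using this

lemma aux_span_eq_top_iff (S : Set R) :
    Ideal.span S = ⊤ ↔ ∃ s ∈ S, IsUnit s := by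
  constructor
  · intro h
    by_contra hc
    push_neg at hc
    have hsub : S ⊆ (maximalIdeal R : Set R) := fun s hs =>
      (mem_maximalIdeal s).mpr (mem_nonunits_iff.mpr (hc s hs))
    have := Ideal.span_le.mpr hsub
    rw [h] at this
    exact (maximalIdeal.isMaximal R).ne_top (top_le_iff.mp this)
  · rintro ⟨s, hs, hu⟩
    exact Ideal.eq_top_of_isUnit_mem _ (Ideal.subset_span hs) hu

lemma aux_exists_unit_minor_iff {K : Type*} [Field K] [Fintype K] {m n : ℕ} (hmn : m ≤ n)
    (B : Matrix (Fin m) (Fin n) K) :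
    (∃ (r : Fin m → Fin m) (c : Fin m → Fin n), IsUnit ((B.submatrix r c).det)) ↔
      LinearIndependent K (fun i => B i) := by
  classical
  constructor
  · rintro ⟨r, c, hu⟩
    rw [← Matrix.isUnit_iff_isUnit_det, ← Matrix.linearIndependent_rows_iff_isUnit] at hu
    have h1 : LinearIndependent K ((LinearMap.funLeft K K c) ∘ (fun i => B (r i))) := by
      convert hu using 1
      funext i j
      rfl
    have h2 : LinearIndependent K (fun i => B (r i)) := h1.of_comp _
    have hrinj : Function.Injective r := fun i j hij =>
      h2.injective (show B (r i) = B (r j) by rw [hij])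
    let e : Fin m ≃ Fin m := Equiv.ofBijective r ⟨hrinj, Finite.surjective_of_injective hrinj⟩
    have h3 : LinearIndependent K ((fun i => B (r i)) ∘ e.symm) := h2.comp _ e.symm.injective
    have h4 : (fun i => B i) = (fun i => B (r i)) ∘ e.symm := by
      funext i
      show B i = B (r (e.symm i))
      rw [show r (e.symm i) = e (e.symm i) from rfl, Equiv.apply_symm_apply]
    rw [h4]
    exact h3
  · intro hli
    have hrank : B.rank = m := by simpa using hli.rank_matrix
    have hsp : Submodule.span K (Set.range Bᵀ) = ⊤ := by
      apply Submodule.eq_top_of_finrank_eq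
      have hrc := Matrix.rank_eq_finrank_span_cols B
      rw [hrank] at hrc
      rw [Module.finrank_fin_fun]
      exact hrc.symm
    obtain ⟨t, hts, hsp', hli'⟩ := exists_linearIndependent K (Set.range Bᵀ)
    rw [hsp] at hsp'
    have htfin : t.Finite := Set.toFinite t
    haveI : Fintype t := htfin.fintype
    let b : Module.Basis t K (Fin m → K) := Module.Basis.mk hli' (by rw [Subtype.range_val, hsp'])
    have hcard : Fintype.card t = m := by
      have h := Module.finrank_eq_card_basis b
      rw [Module.finrank_fin_fun] at h
      omega
    let e : Fin m ≃ t := (Fintype.equivFinOfCardEq hcard).symm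
    have hrange : ∀ i : Fin m, ∃ j, Bᵀ j = ((e i : Fin m → K)) := fun i => hts (e i).2
    choose c hc using hrange
    refine ⟨id, c, ?_⟩
    rw [← Matrix.isUnit_iff_isUnit_det, ← Matrix.linearIndependent_cols_iff_isUnit]
    have hcols : (fun i => (B.submatrix id c)ᵀ i) = fun i => ((e i : Fin m → K)) := by
      funext i
      rw [← hc i]
      rfl
    show LinearIndependent K (fun i => (B.submatrix id c)ᵀ i)
    rw [hcols]
    exact hli'.comp (fun i => e i) (fun i j hij => e.injective hij)

lemma aux_mccoyRank_eq_iff [Fintype R] {m n : ℕ} (A : Matrix (Fin m) (Fin n) R) :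
    mccoyRank A = m ↔ (minorsIdeal A m).annihilator = ⊥ := by
  classical
  have h0 : (minorsIdeal A 0).annihilator = ⊥ := by
    have htop : minorsIdeal A 0 = ⊤ := by
      apply Ideal.eq_top_of_isUnit_mem _ (Ideal.subset_span ?_) isUnit_one
      exact ⟨Fin.elim0, Fin.elim0, Matrix.det_fin_zero.symm⟩
    rw [htop]
    exact (aux_annihilator_eq_bot_iff ⊤).mpr rfl
  have hub : ∀ k ∈ {k | (minorsIdeal A k).annihilator = ⊥}, k ≤ m := by
    intro k hk
    by_contra hkm
    push_neg at hkm
    have hbot : minorsIdeal A k = ⊥ := by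
      apply le_bot_iff.mp
      apply Ideal.span_le.mpr
      rintro d ⟨r, c, rfl⟩
      have hninj : ¬ Function.Injective r := fun hinj => by
        have := Fintype.card_le_of_injective r hinj
        simp only [Fintype.card_fin] at this
        omega
      obtain ⟨i, j, hij, hne⟩ := Function.not_injective_iff.mp hninj
      have hdet : (A.submatrix r c).det = 0 :=
        Matrix.det_zero_of_row_eq hne (by
          funext j'
          simp [Matrix.submatrix_apply, hij])
      simp [hdet]
    rw [Set.mem_setOf_eq, hbot, Submodule.annihilator_bot] at hk
    exact one_ne_zero ((Submodule.mem_bot R).mp (hk ▸ Submodule.mem_top (x := (1 : R))))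
  constructor
  · intro h
    have hmem := Nat.sSup_mem ⟨0, h0⟩ ⟨m, hub⟩
    rw [show sSup {k | (minorsIdeal A k).annihilator = ⊥} = mccoyRank A from rfl, h] at hmem
    exact hmem
  · intro h
    exact le_antisymm (csSup_le ⟨0, h0⟩ hub) (le_csSup ⟨m, hub⟩ h)

lemma aux_mccoy_iff_li [Fintype R] {m n : ℕ} (hmn : m ≤ n) (A : Matrix (Fin m) (Fin n) R) :
    mccoyRank A = m ↔
      LinearIndependent (ResidueField R) (fun i => (A.map (residue R)) i) := by
  classical
  haveI : Finite (ResidueField R) := Finite.of_surjective _ residue_surjective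
  haveI : Fintype (ResidueField R) := Fintype.ofFinite _
  rw [aux_mccoyRank_eq_iff, aux_annihilator_eq_bot_iff, minorsIdeal, aux_span_eq_top_iff,
    ← aux_exists_unit_minor_iff hmn]
  have hdet : ∀ (r : Fin m → Fin m) (c : Fin m → Fin n),
      ((A.map (residue R)).submatrix r c).det = residue R ((A.submatrix r c).det) := by
    intro r c
    rw [Matrix.submatrix_map, RingHom.map_det]
    rfl
  constructor
  · rintro ⟨d, ⟨r, c, rfl⟩, hu⟩
    exact ⟨r, c, by rw [hdet]; exact (isUnit_map_iff (residue R) _).mpr hu⟩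
  · rintro ⟨r, c, hu⟩
    rw [hdet] at hu
    exact ⟨(A.submatrix r c).det, ⟨r, c, rfl⟩, (isUnit_map_iff (residue R) _).mp hu⟩

/-- Splitting of a matrix over a local ring into its maximal-ideal part and residue part. -/
noncomputable def aux_matrixEquiv (m n : ℕ) :
    Matrix (Fin m) (Fin n) R ≃
      ((Fin m → Fin n → maximalIdeal R) × Matrix (Fin m) (Fin n) (ResidueField R)) where
  toFun A :=
    (fun i j => ⟨A i j - Function.surjInv residue_surjective (residue R (A i j)), by
      rw [← Ideal.Quotient.eq_zero_iff_mem]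
      show residue R _ = 0
      rw [map_sub, Function.surjInv_eq residue_surjective, sub_self]⟩,
     A.map (residue R))
  invFun x := Matrix.of fun i j =>
    (x.1 i j : R) + Function.surjInv residue_surjective (x.2 i j)
  left_inv A := by
    ext i j
    show (A i j - Function.surjInv residue_surjective (residue R (A i j))) +
      Function.surjInv residue_surjective ((A.map (residue R)) i j) = A i j
    rw [Matrix.map_apply, sub_add_cancel]
  right_inv x := by
    obtain ⟨u, B⟩ := x
    have hres : ∀ i j, residue R ((u i j : R) + Function.surjInv residue_surjective (B i j))
        = B i j := by
      intro i j
      rw [map_add, Function.surjInv_eq residue_surjective]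
      have : residue R (u i j : R) = 0 := Ideal.Quotient.eq_zero_iff_mem.mpr (u i j).2
      rw [this, zero_add]
    refine Prod.ext ?_ ?_
    · funext i j
      apply Subtype.ext
      show ((u i j : R) + Function.surjInv residue_surjective (B i j)) -
        Function.surjInv residue_surjective
          (residue R ((u i j : R) + Function.surjInv residue_surjective (B i j))) = (u i j : R)
      rw [hres i j, add_sub_cancel_right]
    · ext i j
      exact hres i j

end Aux

theorem card_matrices_mccoyRank_eq {R : Type*} [CommRing R] [IsLocalRing R] [Fintype R]
    {m n : ℕ} (hmn : m ≤ n) :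
    Nat.card {A : Matrix (Fin m) (Fin n) R // mccoyRank A = m} =
      Nat.card R ^ (m * (m - 1) / 2) *
        ∏ i ∈ Finset.range m,
          (Nat.card R ^ (n - i) - Nat.card (IsLocalRing.maximalIdeal R) ^ (n - i)) := by
  classical
  haveI : Finite (IsLocalRing.ResidueField R) :=
    Finite.of_surjective _ IsLocalRing.residue_surjective
  haveI : Fintype (IsLocalRing.ResidueField R) := Fintype.ofFinite _
  set K := IsLocalRing.ResidueField R
  set q := Nat.card K with hq
  set t := Nat.card (IsLocalRing.maximalIdeal R) with ht
  -- step 1: rewrite the condition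
  have e1 : {A : Matrix (Fin m) (Fin n) R // mccoyRank A = m} ≃
      {A : Matrix (Fin m) (Fin n) R //
        LinearIndependent K (fun i => (A.map (IsLocalRing.residue R)) i)} :=
    Equiv.subtypeEquivRight (fun A => aux_mccoy_iff_li hmn A)
  -- step 2: split by the residue map
  have e2 : {A : Matrix (Fin m) (Fin n) R //
        LinearIndependent K (fun i => (A.map (IsLocalRing.residue R)) i)} ≃
      ((Fin m → Fin n → IsLocalRing.maximalIdeal R) ×
        {B : Matrix (Fin m) (Fin n) K // LinearIndependent K (fun i => B i)}) := by
    have e2a : {A : Matrix (Fin m) (Fin n) R //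
          LinearIndependent K (fun i => (A.map (IsLocalRing.residue R)) i)} ≃
        {x : (Fin m → Fin n → IsLocalRing.maximalIdeal R) × Matrix (Fin m) (Fin n) K //
          LinearIndependent K (fun i => x.2 i)} :=
      Equiv.subtypeEquiv (aux_matrixEquiv (R := R) m n) (fun A => Iff.rfl)
    refine e2a.trans ?_
    exact
      { toFun := fun x => (x.1.1, ⟨x.1.2, x.2⟩)
        invFun := fun y => ⟨(y.1, y.2.1), y.2.2⟩
        left_inv := fun _ => rfl
        right_inv := fun _ => rfl }
  rw [Nat.card_congr (e1.trans e2), Nat.card_prod]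
  -- step 3: count
  have hcard1 : Nat.card (Fin m → Fin n → IsLocalRing.maximalIdeal R) = t ^ (m * n) := by
    rw [Nat.card_fun, Nat.card_fun, ← pow_mul, Nat.card_eq_fintype_card (α := Fin n),
      Nat.card_eq_fintype_card (α := Fin m), Fintype.card_fin, Fintype.card_fin, mul_comm n m]
  have hfr : Module.finrank K (Fin n → K) = n := Module.finrank_fin_fun K
  have hcard2 : Nat.card {B : Matrix (Fin m) (Fin n) K // LinearIndependent K (fun i => B i)} =
      ∏ i ∈ Finset.range m, (q ^ n - q ^ i) := by
    have h := card_linearIndependent (K := K) (V := Fin n → K) (k := m) (by rw [hfr]; exact hmn)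
    rw [hfr] at h
    rw [hq, Nat.card_eq_fintype_card (α := K),
      ← Fin.prod_univ_eq_prod_range (fun i => Fintype.card K ^ n - Fintype.card K ^ i) m]
    exact h
  rw [hcard1, hcard2]
  -- step 4: arithmetic
  have hR : Nat.card R = t * q := by
    rw [ht, hq]
    exact Submodule.card_eq_card_quotient_mul_card (IsLocalRing.maximalIdeal R)
  have htpos : 0 < t := Nat.card_pos
  have hqpos : 0 < q := Nat.card_pos
  -- factor each term
  have hterm1 : ∀ i ∈ Finset.range m, q ^ n - q ^ i = q ^ i * (q ^ (n - i) - 1) := by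
    intro i hi
    have hin : i ≤ n := le_trans (Nat.le_of_lt (Finset.mem_range.mp hi)) hmn
    rw [Nat.mul_sub, mul_one, ← pow_add, Nat.add_sub_cancel' hin]
  have hterm2 : ∀ i ∈ Finset.range m,
      Nat.card R ^ (n - i) - t ^ (n - i) = t ^ (n - i) * (q ^ (n - i) - 1) := by
    intro i _
    rw [hR, mul_pow, Nat.mul_sub, mul_one, mul_comm]
  rw [Finset.prod_congr rfl hterm1, Finset.prod_congr rfl hterm2, Finset.prod_mul_distrib,
    Finset.prod_mul_distrib, Finset.prod_pow_eq_pow_sum, Finset.prod_pow_eq_pow_sum]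
  have hsum1 : ∑ i ∈ Finset.range m, i = m * (m - 1) / 2 := Finset.sum_range_id m
  have hsum2 : (∑ i ∈ Finset.range m, (n - i)) + ∑ i ∈ Finset.range m, i = m * n := by
    rw [← Finset.sum_add_distrib]
    rw [Finset.sum_congr rfl (fun i hi => Nat.sub_add_cancel
      (le_trans (Nat.le_of_lt (Finset.mem_range.mp hi)) hmn))]
    simp [mul_comm]
  rw [hR, mul_pow, hsum1]
  have key : m * (m - 1) / 2 + ∑ i ∈ Finset.range m, (n - i) = m * n := by
    rw [← hsum1, add_comm]
    exact hsum2
  have hts : t ^ (m * n) = t ^ (m * (m - 1) / 2) * t ^ (∑ i ∈ Finset.range m, (n - i)) := by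
    rw [← pow_add, key]
  rw [hts]
  ring
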